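/- Let κ_1, κ_2, κ_3 > 0 and C > 0 be real numbers and let d ≥ 1 be an integer, and assume dκ_2² > κ_1κ_3. Define v̄ = κ_1/κ_2 and w̄ = (dκ_2² − κ_1κ_3)/(κ_2κ_3C), so that (v̄, w̄) ∈ ℝ^2_{>0}, and define V : ℝ^2_{>0} → ℝ by V(v,w) = κ_2(v − v̄ log v) + κ_3C(w − w̄ log w). Then for every differentiable function (v,w) : ℝ → ℝ^2_{>0} satisfying v̇ = v((dκ_2 − κ_1) + (κ_2 − κ_3)v − κ_3Cw) and ẇ = w(−κ_1 + κ_2 v), one has d/dt V(v(t), w(t)) = κ_2(κ_2 − κ_3)(v(t) − v̄)² for all t ∈ ℝ. -/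

import Mathlib

/-- Along any positive solution of the predator–prey system
`v̇ = v((dκ₂ − κ₁) + (κ₂ − κ₃)v − κ₃Cw)`, `ẇ = w(−κ₁ + κ₂v)`, the Lyapunov
function `V(v,w) = κ₂(v − v̄ log v) + κ₃C(w − w̄ log w)`, where `v̄ = κ₁/κ₂` and
`w̄ = (dκ₂² − κ₁κ₃)/(κ₂κ₃C)`, satisfies
`d/dt V(v(t),w(t)) = κ₂(κ₂ − κ₃)(v(t) − v̄)²`. -/
theorem stmt17 (κ₁ κ₂ κ₃ C : ℝ) (hκ₁ : 0 < κ₁) (hκ₂ : 0 < κ₂) (hκ₃ : 0 < κ₃)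
    (hC : 0 < C) (d : ℤ) (hd : 1 ≤ d)
    (hcond : κ₁ * κ₃ < (d : ℝ) * κ₂ ^ 2) :
    (0 < κ₁ / κ₂ ∧ 0 < ((d : ℝ) * κ₂ ^ 2 - κ₁ * κ₃) / (κ₂ * κ₃ * C)) ∧
    ∀ v w : ℝ → ℝ,
      (∀ t, 0 < v t ∧ 0 < w t) →
      (∀ t, HasDerivAt v
        (v t * (((d : ℝ) * κ₂ - κ₁) + (κ₂ - κ₃) * v t - κ₃ * C * w t)) t) →
      (∀ t, HasDerivAt w (w t * (-κ₁ + κ₂ * v t)) t) →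
      ∀ t, HasDerivAt
        (fun s => κ₂ * (v s - (κ₁ / κ₂) * Real.log (v s)) +
          κ₃ * C * (w s - (((d : ℝ) * κ₂ ^ 2 - κ₁ * κ₃) / (κ₂ * κ₃ * C)) * Real.log (w s)))
        (κ₂ * (κ₂ - κ₃) * (v t - κ₁ / κ₂) ^ 2) t := by
  refine ⟨⟨div_pos hκ₁ hκ₂, div_pos (by linarith) (by positivity)⟩, ?_⟩
  intro v w hpos hv hw t
  obtain ⟨hvt, hwt⟩ := hpos t
  set v' := v t * (((d : ℝ) * κ₂ - κ₁) + (κ₂ - κ₃) * v t - κ₃ * C * w t) with hv'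
  set w' := w t * (-κ₁ + κ₂ * v t) with hw'
  have hlogv : HasDerivAt (fun s => Real.log (v s)) (v' / v t) t := by
    have := (hv t).log hvt.ne'
    simpa [Function.comp, div_eq_inv_mul, hv'] using this
  have hlogw : HasDerivAt (fun s => Real.log (w s)) (w' / w t) t := by
    have := (hw t).log hwt.ne'
    simpa [Function.comp, div_eq_inv_mul, hw'] using this
  have H := ((((hv t).sub (hlogv.const_mul (κ₁ / κ₂))).const_mul κ₂).add
    (((hw t).sub (hlogw.const_mul (((d : ℝ) * κ₂ ^ 2 - κ₁ * κ₃) / (κ₂ * κ₃ * C)))).const_mul (κ₃ * C)))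
  refine H.congr_deriv ?_
  rw [hv', hw']
  field_simp
  ring
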